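/- In the setting of g₂ = (sp(1)₃ ⊕ sp(1)₁) ⊕ ℍ² with [e₁,e₂] = λE₊ (λ ≠ 0), and with s ∈ g₂ an element acting on ℍ² as right multiplication by i ∈ Im ℍ, define X_n := E₀ − 3s − (2/(λn)) e₂ and Y_n := E₋ + n e₁. Then [E₀ − 3s, e₁] = 0 and [X_n, Y_n] = (2/(λn)) E₋ e₂, so [X_n,Y_n] → 0 as n → ∞ while the component E₀ ∧ E₋ of X_n ∧ Y_n in sp(1)₃ is nonzero and constant. -/

import Mathlib

open scoped Quaternion

noncomputable section

/-- The quaternion units. -/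
def qi : ℍ[ℝ] := ⟨0, 1, 0, 0⟩
def qj : ℍ[ℝ] := ⟨0, 0, 1, 0⟩
def qk : ℍ[ℝ] := ⟨0, 0, 0, 1⟩

/-- `E₀ = diag(3i, i)` acting on `ℍ²` by left multiplication. -/
def mE0 (v : Fin 2 → ℍ[ℝ]) : Fin 2 → ℍ[ℝ] := ![3 * (qi * v 0), qi * v 1]

/-- `E₊ = [[0,√3],[-√3,2j]]` acting on `ℍ²` by left multiplication. -/
def mEp (v : Fin 2 → ℍ[ℝ]) : Fin 2 → ℍ[ℝ] :=
  ![(Real.sqrt 3 : ℝ) • v 1, -((Real.sqrt 3 : ℝ) • v 0) + 2 * (qj * v 1)]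

/-- `E₋ = [[0,√3 i],[√3 i,2k]]` acting on `ℍ²` by left multiplication. -/
def mEm (v : Fin 2 → ℍ[ℝ]) : Fin 2 → ℍ[ℝ] :=
  ![(Real.sqrt 3 : ℝ) • (qi * v 1), (Real.sqrt 3 : ℝ) • (qi * v 0) + 2 * (qk * v 1)]

/-- The standard basis of `ℍ²`. -/
def e1v : Fin 2 → ℍ[ℝ] := ![1, 0]
def e2v : Fin 2 → ℍ[ℝ] := ![0, 1]

open Filter Topology

/-- In the setting `g₂ = (sp(1)₃ ⊕ sp(1)₁) ⊕ ℍ²` with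
`[ι e₁, ι e₂] = λ·E₊` (`λ ≠ 0`) and `s ∈ sp(1)₁` acting on `ℍ²` by right multiplication
by `i`, set `Xₙ := E₀ - 3s - (2/(λn))·e₂` and `Yₙ := E₋ + n·e₁`.  Then
`[E₀ - 3s, e₁] = 0` and `[Xₙ, Yₙ] = (2/(λn))·(E₋ e₂)`, so `[Xₙ,Yₙ] → 0` as `n → ∞`
(in the `Q`-norm), while the wedge `E₀ ∧ E₋` of the `sp(1)₃`-components is nonzero
(`E₀, E₋` are linearly independent) and constant. -/
theorem stmt18 (g : Type*) [LieRing g] [LieAlgebra ℝ g]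
    (Q : LinearMap.BilinForm ℝ g)
    (hQsymm : ∀ x y : g, Q x y = Q y x)
    (hQpos : ∀ x : g, x ≠ 0 → 0 < Q x x)
    (hQad : ∀ a x y : g, Q a ⁅x, y⁆ = Q ⁅a, x⁆ y)
    (E0g Epg Emg s : g) (ι : (Fin 2 → ℍ[ℝ]) →ₗ[ℝ] g) (hι : Function.Injective ι)
    -- bracket relations in sp(1)₃
    (hb1 : ⁅E0g, Epg⁆ = (2 : ℝ) • Emg)
    (hb2 : ⁅E0g, Emg⁆ = -((2 : ℝ) • Epg))
    (hb3 : ⁅Epg, Emg⁆ = (2 : ℝ) • E0g)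
    -- sp(1)₃ acts on ℍ² by left multiplication by the matrices E₀, E₊, E₋
    (hE0 : ∀ v, ⁅E0g, ι v⁆ = ι (mE0 v))
    (hEp : ∀ v, ⁅Epg, ι v⁆ = ι (mEp v))
    (hEm : ∀ v, ⁅Emg, ι v⁆ = ι (mEm v))
    -- `s ∈ sp(1)₁` acts by right multiplication by `i` and commutes with sp(1)₃
    (hs : ∀ v, ⁅s, ι v⁆ = ι fun l => v l * qi)
    (hsE0 : ⁅s, E0g⁆ = 0) (hsEp : ⁅s, Epg⁆ = 0) (hsEm : ⁅s, Emg⁆ = 0)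
    -- `[e₁, e₂] = λ·E₊` with `λ ≠ 0`
    (lam : ℝ) (hlam : lam ≠ 0) (hbr : ⁅ι e1v, ι e2v⁆ = lam • Epg) :
    let X : ℕ → g := fun n => E0g - (3 : ℝ) • s - (2 / (lam * n)) • ι e2v
    let Y : ℕ → g := fun n => Emg + (n : ℝ) • ι e1v
    ⁅E0g - (3 : ℝ) • s, ι e1v⁆ = 0 ∧
    (∀ n : ℕ, 1 ≤ n → ⁅X n, Y n⁆ = (2 / (lam * n)) • ι (mEm e2v)) ∧
    Tendsto (fun n : ℕ => Real.sqrt (Q ⁅X n, Y n⁆ ⁅X n, Y n⁆)) atTop (𝓝 0) ∧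
    LinearIndependent ℝ ![E0g, Emg] := by

  intro X Y
  have hvec : mE0 e1v = (3 : ℝ) • (fun l => e1v l * qi) := by
    funext l
    fin_cases l <;> simp [mE0, e1v, ← Quaternion.coe_mul_eq_smul] <;> left <;>
      exact_mod_cast rfl
  have key1 : ⁅E0g - (3 : ℝ) • s, ι e1v⁆ = 0 := by
    rw [sub_lie, smul_lie, hE0 e1v, hs e1v, hvec, map_smul, sub_self]
  have key2 : ∀ n : ℕ, 1 ≤ n → ⁅X n, Y n⁆ = (2 / (lam * n)) • ι (mEm e2v) := by
    intro n hn
    have hn' : (n : ℝ) ≠ 0 := Nat.cast_ne_zero.2 (by omega)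
    have h1 : ⁅ι e2v, Emg⁆ = -ι (mEm e2v) := by rw [← lie_skew, hEm]
    have h2 : ⁅ι e2v, ι e1v⁆ = -(lam • Epg) := by rw [← lie_skew, hbr]
    show ⁅E0g - (3 : ℝ) • s - (2 / (lam * n)) • ι e2v, Emg + (n : ℝ) • ι e1v⁆ = _
    simp only [lie_add, sub_lie, smul_lie, lie_smul, hb2, hsEm, hE0, hEm, hs, h1, h2,
      hvec, map_smul, smul_zero, smul_neg, sub_zero, neg_neg]
    match_scalars <;> field_simp <;> ring
  refine ⟨key1, key2, ?_, ?_⟩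
  · set w : g := ι (mEm e2v) with hw
    have hc : Tendsto (fun n : ℕ => 2 / (lam * n)) atTop (𝓝 0) := by
      have h := Tendsto.div_atTop (tendsto_const_nhds (x := (2 / lam : ℝ)))
        tendsto_natCast_atTop_atTop
      refine h.congr fun n => ?_
      rw [div_div]
    have hQww : 0 ≤ Q w w := by
      rcases eq_or_ne w 0 with h | h
      · simp [h]
      · exact (hQpos w h).le
    have hmain : Tendsto (fun n : ℕ => |2 / (lam * n)| * Real.sqrt (Q w w)) atTop (𝓝 0) := by
      simpa using (hc.abs).mul_const (Real.sqrt (Q w w))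
    refine hmain.congr' ?_
    filter_upwards [eventually_ge_atTop 1] with n hn
    rw [key2 n hn]
    have hqq : (Q ((2 / (lam * n)) • w)) ((2 / (lam * n)) • w)
        = (2 / (lam * n)) ^ 2 * ((Q w) w) := by
      simp [map_smul, smul_eq_mul]; ring
    rw [hqq, Real.sqrt_mul (sq_nonneg _), Real.sqrt_sq_eq_abs]
  · rw [LinearIndependent.pair_iff]
    intro a b hab
    have h := congrArg (fun z : g => ⁅z, ι e1v⁆) hab
    simp only [add_lie, smul_lie, hE0, hEm, zero_lie] at h
    have h0 : a • mE0 e1v + b • mEm e1v = 0 := by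
      apply hι
      rw [map_add, map_smul, map_smul, map_zero]
      exact h
    have hs3 : (0 : ℝ) < Real.sqrt 3 := Real.sqrt_pos.2 (by norm_num)
    have h00 := congrArg (fun q : ℍ[ℝ] => q.imI) (congrFun h0 0)
    have h11 := congrArg (fun q : ℍ[ℝ] => q.imI) (congrFun h0 1)
    have hqi : qi.imI = 1 := rfl
    have hqr : qi.re = 0 := rfl
    have hqj : qi.imJ = 0 := rfl
    have hqk : qi.imK = 0 := rfl
    simp [mE0, mEm, e1v, hqi, hqr, hqj, hqk] at h00 h11
    refine ⟨?_, h11⟩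
    rcases h00 with h | h
    · exact h
    · rw [show QuaternionAlgebra.re (3 : ℍ[ℝ]) = 3 from rfl] at h; norm_num at h


end
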